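/- Let S ≥ 1, P ∈ {1,...,S}, σ ≥ 0, ξ ≥ 0, and let u, v ∈ (ℝ⁺)^S be nondecreasingly sorted vectors with u ≺_* v and u(P) ≤ v(P). Then for every k ∈ {1,...,S}, Σ_{i=k, i≠P}^S [u(i) − ξ]⁺ + [u(P) + σ − ξ]⁺ ≤ Σ_{i=k, i≠P}^S [v(i) − ξ]⁺ + [v(P) + σ − ξ]⁺. -/

import Mathlib

open Finset

/-- The nondecreasing rearrangement of a finite real vector. -/
noncomputable def sortVec {S : ℕ} (u : Fin S → ℝ) : Fin S → ℝ := u ∘ Tuple.sort u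

/-- The Schur-convex semi-ordering `≺_c` : equal total sums, and each tail sum
(from the second coordinate on) of the sorted version of `u` is dominated by that of `v`. -/
def schurLE {S : ℕ} (u v : Fin S → ℝ) : Prop :=
  (∑ i, u i = ∑ i, v i) ∧
  ∀ k : Fin S, 1 ≤ (k : ℕ) →
    ∑ i ∈ Finset.Ici k, sortVec u i ≤ ∑ i ∈ Finset.Ici k, sortVec v i

/-- The semi-ordering `≺_*` : every tail sum of `u` is dominated by that of `v`. -/
def starLE {S : ℕ} (u v : Fin S → ℝ) : Prop :=
  ∀ k : Fin S, ∑ i ∈ Finset.Ici k, u i ≤ ∑ i ∈ Finset.Ici k, v i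

/-- The semi-ordering `≺_P` : `u ≺_* v` and `u(ℓ) ≤ v(ℓ)` for every `ℓ ≥ P`. -/
def precP {S : ℕ} (P : Fin S) (u v : Fin S → ℝ) : Prop :=
  starLE u v ∧ ∀ ℓ : Fin S, P ≤ ℓ → u ℓ ≤ v ℓ

/-- The map `G̃^P : u ↦ sort([u + σ·e_P − ξ·1]⁺)`.  For `P` the first index,
this is the Kiefer–Wolfowitz map `G`. -/
noncomputable def GP {S : ℕ} (σ ξ : ℝ) (P : Fin S) (u : Fin S → ℝ) : Fin S → ℝ :=
  sortVec (fun i => max (u i + (if i = P then σ else 0) - ξ) 0)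

private lemma tail_raw {S : ℕ} (ξ : ℝ) (u v : Fin S → ℝ) (huv : starLE u v) (m : Fin S) :
    ∑ i ∈ Finset.Ici m, (u i - ξ) ≤ ∑ i ∈ Finset.Ici m, (v i - ξ) := by
  rw [Finset.sum_sub_distrib, Finset.sum_sub_distrib]
  have := huv m
  linarith

private lemma tail_pos {S : ℕ} (ξ : ℝ) (u v : Fin S → ℝ) (hu : Monotone u)
    (huv : starLE u v) (k : Fin S) :
    ∑ i ∈ Finset.Ici k, max (u i - ξ) 0 ≤ ∑ i ∈ Finset.Ici k, max (v i - ξ) 0 := by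
  by_cases h : ((Finset.Ici k).filter (fun i => ξ < u i)).Nonempty
  · set T := (Finset.Ici k).filter (fun i => ξ < u i) with hT
    set m := T.min' h with hm
    have hmT : m ∈ T := T.min'_mem h
    have hkm : k ≤ m := Finset.mem_Ici.1 (Finset.mem_filter.1 hmT).1
    have hξm : ξ < u m := (Finset.mem_filter.1 hmT).2
    have hsub : Finset.Ici m ⊆ Finset.Ici k := Finset.Ici_subset_Ici.2 hkm
    have hzero : ∀ i ∈ Finset.Ici k, i ∉ Finset.Ici m → max (u i - ξ) 0 = 0 := by
      intro i hi hi'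
      have him : ¬ m ≤ i := by simpa [Finset.mem_Ici] using hi'
      have hle : ¬ ξ < u i := fun hc => him (T.min'_le i (Finset.mem_filter.2 ⟨hi, hc⟩))
      push_neg at hle
      exact max_eq_right (by linarith)
    have h1 : ∑ i ∈ Finset.Ici k, max (u i - ξ) 0 = ∑ i ∈ Finset.Ici m, (u i - ξ) := by
      rw [← Finset.sum_subset hsub hzero]
      refine Finset.sum_congr rfl fun i hi => ?_
      have : ξ ≤ u i := le_trans hξm.le (hu (Finset.mem_Ici.1 hi))
      exact max_eq_left (by linarith)
    have h2 : ∑ i ∈ Finset.Ici m, (v i - ξ) ≤ ∑ i ∈ Finset.Ici m, max (v i - ξ) 0 :=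
      Finset.sum_le_sum fun i _ => le_max_left _ _
    have h3 : ∑ i ∈ Finset.Ici m, max (v i - ξ) 0 ≤ ∑ i ∈ Finset.Ici k, max (v i - ξ) 0 :=
      Finset.sum_le_sum_of_subset_of_nonneg hsub fun i _ _ => le_max_right _ _
    have h4 := tail_raw ξ u v huv m
    linarith
  · have h1 : ∑ i ∈ Finset.Ici k, max (u i - ξ) 0 = 0 := by
      refine Finset.sum_eq_zero fun i hi => ?_
      have : ¬ ξ < u i := fun hc => h ⟨i, Finset.mem_filter.2 ⟨hi, hc⟩⟩
      push_neg at this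
      exact max_eq_right (by linarith)
    rw [h1]
    exact Finset.sum_nonneg fun i _ => le_max_right _ _

private lemma mixed_tail {S : ℕ} (ξ : ℝ) (P : Fin S) (u v : Fin S → ℝ)
    (hu : Monotone u) (huv : starLE u v) (hP : u P ≤ v P) (k : Fin S) (hkP : k ≤ P) :
    ∑ i ∈ Finset.Ici k, max (u i - ξ) 0 + min (u P - ξ) 0 ≤
      ∑ i ∈ Finset.Ici k, max (v i - ξ) 0 + min (v P - ξ) 0 := by
  by_cases hP' : ξ ≤ u P
  · have h1 : min (u P - ξ) 0 = 0 := min_eq_right (by linarith)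
    have h2 : min (v P - ξ) 0 = 0 := min_eq_right (by linarith)
    have := tail_pos ξ u v hu huv k
    rw [h1, h2]
    linarith
  · push_neg at hP'
    have h1 : min (u P - ξ) 0 = u P - ξ := min_eq_left (by linarith)
    by_cases h : ((Finset.Ici k).filter (fun i => ξ < u i)).Nonempty
    · set T := (Finset.Ici k).filter (fun i => ξ < u i) with hT
      set m := T.min' h with hm
      have hmT : m ∈ T := T.min'_mem h
      have hkm : k ≤ m := Finset.mem_Ici.1 (Finset.mem_filter.1 hmT).1
      have hξm : ξ < u m := (Finset.mem_filter.1 hmT).2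
      have hPm : ¬ m ≤ P := fun hc => absurd (hu hc) (by linarith)
      have hPnotm : P ∉ Finset.Ici m := by simpa [Finset.mem_Ici] using hPm
      have hsub : Finset.Ici m ⊆ Finset.Ici k := Finset.Ici_subset_Ici.2 hkm
      have hzero : ∀ i ∈ Finset.Ici k, i ∉ Finset.Ici m → max (u i - ξ) 0 = 0 := by
        intro i hi hi'
        have him : ¬ m ≤ i := by simpa [Finset.mem_Ici] using hi'
        have hle : ¬ ξ < u i := fun hc => him (T.min'_le i (Finset.mem_filter.2 ⟨hi, hc⟩))
        push_neg at hle
        exact max_eq_right (by linarith)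
      have hLu : ∑ i ∈ Finset.Ici k, max (u i - ξ) 0 = ∑ i ∈ Finset.Ici m, (u i - ξ) := by
        rw [← Finset.sum_subset hsub hzero]
        refine Finset.sum_congr rfl fun i hi => ?_
        have : ξ ≤ u i := le_trans hξm.le (hu (Finset.mem_Ici.1 hi))
        exact max_eq_left (by linarith)
      have hins : insert P (Finset.Ici m) ⊆ Finset.Ici k := by
        intro i hi
        rcases Finset.mem_insert.1 hi with rfl | hi
        · exact Finset.mem_Ici.2 hkP
        · exact hsub hi
      have hsi : ∑ i ∈ insert P (Finset.Ici m), max (v i - ξ) 0 =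
          max (v P - ξ) 0 + ∑ i ∈ Finset.Ici m, max (v i - ξ) 0 :=
        Finset.sum_insert hPnotm
      have hR : ∑ i ∈ insert P (Finset.Ici m), max (v i - ξ) 0 ≤
          ∑ i ∈ Finset.Ici k, max (v i - ξ) 0 :=
        Finset.sum_le_sum_of_subset_of_nonneg hins fun i _ _ => le_max_right _ _
      have h2 : ∑ i ∈ Finset.Ici m, (v i - ξ) ≤ ∑ i ∈ Finset.Ici m, max (v i - ξ) 0 :=
        Finset.sum_le_sum fun i _ => le_max_left _ _
      have h4 := tail_raw ξ u v huv m
      have h5 := max_add_min (v P - ξ) 0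
      rw [hLu, h1]
      linarith
    · have hLu : ∑ i ∈ Finset.Ici k, max (u i - ξ) 0 = 0 := by
        refine Finset.sum_eq_zero fun i hi => ?_
        have : ¬ ξ < u i := fun hc => h ⟨i, Finset.mem_filter.2 ⟨hi, hc⟩⟩
        push_neg at this
        exact max_eq_right (by linarith)
      have h2 : (0:ℝ) ≤ ∑ i ∈ Finset.Ici k, max (v i - ξ) 0 :=
        Finset.sum_nonneg fun i _ => le_max_right _ _
      have h3 : u P - ξ ≤ min (v P - ξ) 0 := le_min (by linarith) (by linarith)
      rw [hLu, h1]
      linarith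

/-- comparison of the shifted tail sums of positive parts under `≺_*`. -/
theorem tail_pos_part_le {S : ℕ} (hS : 0 < S) (P : Fin S) (σ ξ : ℝ)
    (hσ : 0 ≤ σ) (hξ : 0 ≤ ξ)
    (u v : Fin S → ℝ)
    (hu : Monotone u) (hv : Monotone v)
    (hu0 : ∀ i, 0 ≤ u i) (hv0 : ∀ i, 0 ≤ v i)
    (huv : starLE u v) (hP : u P ≤ v P) (k : Fin S) :
    (∑ i ∈ (Finset.Ici k).erase P, max (u i - ξ) 0) + max (u P + σ - ξ) 0 ≤
      (∑ i ∈ (Finset.Ici k).erase P, max (v i - ξ) 0) + max (v P + σ - ξ) 0 := by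
  by_cases hkP : k ≤ P
  · have hPmem : P ∈ Finset.Ici k := Finset.mem_Ici.2 hkP
    have heu := Finset.sum_erase_add (Finset.Ici k) (fun i => max (u i - ξ) 0) hPmem
    have hev := Finset.sum_erase_add (Finset.Ici k) (fun i => max (v i - ξ) 0) hPmem
    by_cases hσξ : u P + σ ≤ ξ
    · have h1 : max (u P + σ - ξ) 0 = 0 := max_eq_right (by linarith)
      have h2 : max (u P - ξ) 0 = 0 := max_eq_right (by linarith)
      have h3 : max (v P - ξ) 0 ≤ max (v P + σ - ξ) 0 := max_le_max (by linarith) le_rfl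
      have ht := tail_pos ξ u v hu huv k
      linarith
    · push_neg at hσξ
      have h1 : max (u P + σ - ξ) 0 = u P + σ - ξ := max_eq_left (by linarith)
      have h2 : max (v P + σ - ξ) 0 = v P + σ - ξ := max_eq_left (by linarith)
      have hm := mixed_tail ξ P u v hu huv hP k hkP
      have hmu := max_add_min (u P - ξ) 0
      have hmv := max_add_min (v P - ξ) 0
      linarith
  · have hPn : P ∉ Finset.Ici k := by simpa [Finset.mem_Ici] using hkP
    rw [Finset.erase_eq_of_notMem hPn]
    exact add_le_add (tail_pos ξ u v hu huv k) (max_le_max (by linarith) le_rfl)
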